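/- arXiv:2408.16409 — 3 statements merged into one kernel-verified Lean document; each statement's English description precedes it below -/
import Mathlib

section
/- There exists a constant D > 0, depending only on the masses, such that for all configurations q with q_i ≠ q_j for i ≠ j in the index set, √J · U ≥ D, where J = Σ_i m_i |q_i − L|² (all L_i equal to a common point L) and U = Σ_{i<j} m_i m_j / |q_i − q_j|. In fact one may take D = M^{-1/2} Σ_{i<j} m_i^{3/2} m_j^{3/2}, where M = Σ m_i. -/
open Finset

/-- `√J · U ≥ D` with the explicit positive constant
`D = M^{-1/2} ∑_{i<j} mᵢ^{3/2} mⱼ^{3/2}`. -/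
theorem sqrtJ_mul_U_ge (k d : ℕ) (hk : 2 ≤ k) (m : Fin k → ℝ) (hm : ∀ i, 0 < m i)
    (L : EuclideanSpace ℝ (Fin d)) (q : Fin k → EuclideanSpace ℝ (Fin d))
    (hq : ∀ i j, i ≠ j → q i ≠ q j) :
    0 < (∑ i, m i) ^ (-(1 : ℝ) / 2) *
        ∑ i, ∑ j ∈ Finset.univ.filter (fun j => i < j),
          m i ^ ((3 : ℝ) / 2) * m j ^ ((3 : ℝ) / 2) ∧
    (∑ i, m i) ^ (-(1 : ℝ) / 2) *
        (∑ i, ∑ j ∈ Finset.univ.filter (fun j => i < j),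
          m i ^ ((3 : ℝ) / 2) * m j ^ ((3 : ℝ) / 2)) ≤
      Real.sqrt (∑ i, m i * ‖q i - L‖ ^ 2) *
        ∑ i, ∑ j ∈ Finset.univ.filter (fun j => i < j), m i * m j / ‖q i - q j‖ := by
  have i0 : Fin k := ⟨0, by omega⟩
  have i1 : Fin k := ⟨1, by omega⟩
  set M := ∑ i, m i with hMdef
  set J := ∑ i, m i * ‖q i - L‖ ^ 2 with hJdef
  have hMpos : 0 < M := Finset.sum_pos (fun i _ => hm i) ⟨i0, mem_univ _⟩
  have hJnn : 0 ≤ J := Finset.sum_nonneg fun i _ => mul_nonneg (hm i).le (sq_nonneg _)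
  have hJpos : 0 < J := by
    rcases hJnn.lt_or_eq with h | h
    · exact h
    exfalso
    have hall : ∀ i : Fin k, q i = L := by
      intro i
      have h0 := (Finset.sum_eq_zero_iff_of_nonneg
        (fun i _ => mul_nonneg (hm i).le (sq_nonneg ‖q i - L‖))).mp h.symm i (mem_univ _)
      have h2 : ‖q i - L‖ ^ 2 = 0 := by
        have := hm i; nlinarith [sq_nonneg ‖q i - L‖]
      have h3 : ‖q i - L‖ = 0 := by
        have := pow_eq_zero_iff (n := 2) (by norm_num) |>.mp h2
        exact this
      have := norm_eq_zero.mp h3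
      rwa [sub_eq_zero] at this
    have hne : (⟨0, by omega⟩ : Fin k) ≠ ⟨1, by omega⟩ := by simp [Fin.ext_iff]
    exact hq _ _ hne (by rw [hall, hall])
  -- key per-term inequality
  have key : ∀ i j : Fin k, i < j →
      M ^ (-(1 : ℝ) / 2) * (m i ^ ((3 : ℝ) / 2) * m j ^ ((3 : ℝ) / 2)) ≤
      Real.sqrt J * (m i * m j / ‖q i - q j‖) := by
    intro i j hij
    have hijne : i ≠ j := ne_of_lt hij
    have hr : (0 : ℝ) < ‖q i - q j‖ := by
      rw [norm_pos_iff]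
      exact sub_ne_zero.mpr (hq i j hijne)
    set r := ‖q i - q j‖
    set a := ‖q i - L‖
    set b := ‖q j - L‖
    have ha : 0 ≤ a := norm_nonneg _
    have hb : 0 ≤ b := norm_nonneg _
    have htri : r ≤ a + b := by
      have : q i - q j = (q i - L) - (q j - L) := by abel
      rw [show r = ‖q i - q j‖ from rfl, this]
      exact norm_sub_le _ _
    have hMge : m i + m j ≤ M := by
      have hsub : ({i, j} : Finset (Fin k)) ⊆ Finset.univ := Finset.subset_univ _
      have := Finset.sum_le_sum_of_subset_of_nonneg hsub
        (fun x _ _ => (hm x).le)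
      rwa [Finset.sum_pair hijne] at this
    have hJge : m i * a ^ 2 + m j * b ^ 2 ≤ J := by
      have hsub : ({i, j} : Finset (Fin k)) ⊆ Finset.univ := Finset.subset_univ _
      have := Finset.sum_le_sum_of_subset_of_nonneg
        (f := fun x => m x * ‖q x - L‖ ^ 2) hsub
        (fun x _ _ => mul_nonneg (hm x).le (sq_nonneg _))
      rwa [Finset.sum_pair hijne] at this
    have hmi := hm i
    have hmj := hm j
    have hkey : m i * m j * r ^ 2 ≤ M * J := by
      have h1 : m i * m j * r ^ 2 ≤ m i * m j * (a + b) ^ 2 := by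
        have : r ^ 2 ≤ (a + b) ^ 2 := by nlinarith
        exact mul_le_mul_of_nonneg_left this (by positivity)
      have h2 : m i * m j * (a + b) ^ 2 ≤ (m i + m j) * (m i * a ^ 2 + m j * b ^ 2) := by
        nlinarith [sq_nonneg (m i * a - m j * b)]
      have h3 : (m i + m j) * (m i * a ^ 2 + m j * b ^ 2) ≤ M * J := by
        have hnn : 0 ≤ m i * a ^ 2 + m j * b ^ 2 := by positivity
        nlinarith
      linarith
    have h1 : Real.sqrt (m i * m j * r ^ 2) ≤ Real.sqrt (M * J) := Real.sqrt_le_sqrt hkey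
    have h2 : Real.sqrt (m i) * Real.sqrt (m j) * r ≤ Real.sqrt M * Real.sqrt J := by
      rw [Real.sqrt_mul (mul_nonneg hmi.le hmj.le), Real.sqrt_mul hmi.le,
        Real.sqrt_sq hr.le, Real.sqrt_mul hMpos.le] at h1
      exact h1
    have hMform : M ^ (-(1 : ℝ) / 2) = (Real.sqrt M)⁻¹ := by
      rw [Real.sqrt_eq_rpow, ← Real.rpow_neg hMpos.le]
      norm_num
    have h32 : ∀ x : ℝ, 0 < x → x ^ ((3 : ℝ) / 2) = x * Real.sqrt x := by
      intro x hx
      rw [Real.sqrt_eq_rpow, show (3 : ℝ) / 2 = 1 + 1 / 2 by norm_num,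
        Real.rpow_add hx, Real.rpow_one]
    have hsM : 0 < Real.sqrt M := Real.sqrt_pos.mpr hMpos
    rw [hMform, h32 _ hmi, h32 _ hmj]
    have h3 : Real.sqrt (m i) * Real.sqrt (m j) ≤ Real.sqrt M * Real.sqrt J / r :=
      (le_div_iff₀ hr).mpr h2
    calc (Real.sqrt M)⁻¹ * (m i * Real.sqrt (m i) * (m j * Real.sqrt (m j)))
        = m i * m j * (Real.sqrt (m i) * Real.sqrt (m j)) / Real.sqrt M := by
          field_simp
      _ ≤ m i * m j * (Real.sqrt M * Real.sqrt J / r) / Real.sqrt M := by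
          gcongr
      _ = Real.sqrt J * (m i * m j / r) := by
          field_simp
  constructor
  · apply mul_pos (Real.rpow_pos_of_pos hMpos _)
    apply Finset.sum_pos'
    · intro i _
      exact Finset.sum_nonneg fun j _ => mul_nonneg
        (Real.rpow_nonneg (hm i).le _) (Real.rpow_nonneg (hm j).le _)
    · refine ⟨⟨0, by omega⟩, mem_univ _, ?_⟩
      apply Finset.sum_pos'
      · intro j _
        exact mul_nonneg (Real.rpow_nonneg (hm _).le _) (Real.rpow_nonneg (hm j).le _)
      · refine ⟨⟨1, by omega⟩, ?_, ?_⟩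
        · simp [Fin.lt_def]
        · exact mul_pos (Real.rpow_pos_of_pos (hm _) _) (Real.rpow_pos_of_pos (hm _) _)
  · simp only [Finset.mul_sum]
    apply Finset.sum_le_sum
    intro i _
    apply Finset.sum_le_sum
    intro j hj
    exact key i j (mem_filter.mp hj).2
end

section
/- Tauberian theorem (Wintner/Boas): let F : (t₀, T] → (0,∞) be C², suppose there is a continuous increasing function g : (0,∞) → (0,∞) with |F''(t)| ≤ g(|F'(t)|)/(t − t₀) for all t ∈ (t₀,T], and suppose F(t)/(t − t₀) → ν₀ as t → t₀⁺ for some real ν₀. Then F'(t) → ν₀ as t → t₀⁺. -/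
open Set Filter

/-- Auxiliary Grönwall-type bound: if `|F''(u)| ≤ C/(u - t₀)` on `[a,b]` with `t₀ < a`,
then `|F' b - F' a| ≤ C (log(b-t₀) - log(a-t₀))`. -/
lemma tauberian_osc_bound (t₀ : ℝ) (F' F'' : ℝ → ℝ) (a b C : ℝ)
    (hab : a ≤ b) (ha : t₀ < a)
    (hderiv : ∀ u ∈ Icc a b, HasDerivAt F' (F'' u) u)
    (hcont : ContinuousOn F'' (Icc a b))
    (hC : ∀ u ∈ Icc a b, |F'' u| ≤ C / (u - t₀)) :
    |F' b - F' a| ≤ C * (Real.log (b - t₀) - Real.log (a - t₀)) := by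
  have huIcc : Set.uIcc a b = Icc a b := uIcc_of_le hab
  have hcont' : ContinuousOn F'' (Set.uIcc a b) := by rw [huIcc]; exact hcont
  have hint : IntervalIntegrable F'' MeasureTheory.volume a b := hcont'.intervalIntegrable
  have h1 : ∫ u in a..b, F'' u = F' b - F' a :=
    intervalIntegral.integral_eq_sub_of_hasDerivAt (fun u hu => hderiv u (huIcc ▸ hu)) hint
  have hpos : ∀ u ∈ Icc a b, (0:ℝ) < u - t₀ := fun u hu => sub_pos.2 (lt_of_lt_of_le ha hu.1)
  have hφderiv : ∀ u ∈ Set.uIcc a b,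
      HasDerivAt (fun u => C * Real.log (u - t₀)) (C / (u - t₀)) u := by
    intro u hu
    rw [huIcc] at hu
    have h0 : u - t₀ ≠ 0 := ne_of_gt (hpos u hu)
    have hlog : HasDerivAt (fun u => Real.log (u - t₀)) ((u - t₀)⁻¹ * 1) u :=
      by simpa [div_eq_mul_inv] using ((hasDerivAt_id' u).sub_const t₀).log h0
    simpa [div_eq_mul_inv] using hlog.const_mul C
  have hcont2 : ContinuousOn (fun u => C / (u - t₀)) (Set.uIcc a b) := by
    rw [huIcc]
    apply ContinuousOn.div continuousOn_const (by fun_prop)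
    intro u hu; exact ne_of_gt (hpos u hu)
  have hint2 : IntervalIntegrable (fun u => C / (u - t₀)) MeasureTheory.volume a b :=
    hcont2.intervalIntegrable
  have h2 : ∫ u in a..b, C / (u - t₀)
      = C * Real.log (b - t₀) - C * Real.log (a - t₀) :=
    intervalIntegral.integral_eq_sub_of_hasDerivAt hφderiv hint2
  calc |F' b - F' a| = |∫ u in a..b, F'' u| := by rw [h1]
    _ ≤ ∫ u in a..b, |F'' u| := intervalIntegral.abs_integral_le_integral_abs hab
    _ ≤ ∫ u in a..b, C / (u - t₀) :=
        intervalIntegral.integral_mono_on hab hint.abs hint2 (fun u hu => hC u hu)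
    _ = C * Real.log (b - t₀) - C * Real.log (a - t₀) := h2
    _ = C * (Real.log (b - t₀) - Real.log (a - t₀)) := by ring

/-- Tauberian theorem of Wintner/Boas: if `F : (t₀,T] → (0,∞)` is C²,
`|F''(t)| ≤ g(|F'(t)|)/(t−t₀)` for a continuous increasing `g : (0,∞) → (0,∞)`,
and `F(t)/(t−t₀) → ν₀` as `t → t₀⁺`, then `F'(t) → ν₀` as `t → t₀⁺`. -/
theorem tauberian_wintner_boas (t₀ T ν₀ : ℝ) (hT : t₀ < T)
    (F F' F'' g : ℝ → ℝ)
    (hFpos : ∀ t ∈ Ioc t₀ T, 0 < F t)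
    (hF' : ∀ t ∈ Ioc t₀ T, HasDerivAt F (F' t) t)
    (hF'' : ∀ t ∈ Ioc t₀ T, HasDerivAt F' (F'' t) t)
    (hF'cont : ContinuousOn F' (Ioc t₀ T))
    (hF''cont : ContinuousOn F'' (Ioc t₀ T))
    (hgcont : ContinuousOn g (Ioi 0))
    (hgmono : MonotoneOn g (Ioi 0))
    (hgpos : ∀ u ∈ Ioi (0 : ℝ), 0 < g u)
    (hbound : ∀ t ∈ Ioc t₀ T, |F'' t| ≤ g |F' t| / (t - t₀))
    (hlim : Tendsto (fun t => F t / (t - t₀)) (nhdsWithin t₀ (Ioi t₀)) (nhds ν₀)) :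
    Tendsto F' (nhdsWithin t₀ (Ioi t₀)) (nhds ν₀) := by
  rw [Metric.tendsto_nhdsWithin_nhds]
  intro ε₀ hε₀
  set ε := min ε₀ 1 with hεdef
  have hε : 0 < ε := lt_min hε₀ one_pos
  have hε1 : ε ≤ 1 := min_le_right _ _
  have hεε₀ : ε ≤ ε₀ := min_le_left _ _
  set B := |ν₀| + 2 with hB
  have hBpos : 0 < B := by positivity
  set C := max (g 0) (g B) with hCdef
  have hCpos : 0 < C := lt_of_lt_of_le (hgpos B hBpos) (le_max_right _ _)
  set ρ := Real.exp (ε / (4 * C)) with hρdef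
  have hρ1 : 1 < ρ := by
    rw [hρdef, ← Real.exp_zero]
    exact Real.exp_lt_exp.2 (by positivity)
  have hρpos : 0 < ρ := lt_trans one_pos hρ1
  have hρ1' : 0 < ρ - 1 := sub_pos.2 hρ1
  have hlogρ : Real.log ρ = ε / (4 * C) := Real.log_exp _
  have hClogρ : C * Real.log ρ = ε / 4 := by
    rw [hlogρ]; field_simp
  set η := ε * (ρ - 1) / (8 * (ρ + 1)) with hηdef
  have hηpos : 0 < η := div_pos (mul_pos hε hρ1') (by positivity)
  rw [Metric.tendsto_nhdsWithin_nhds] at hlim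
  obtain ⟨δ₁, hδ₁pos, hδ₁⟩ := hlim η hηpos
  set δ := min (δ₁ / ρ) ((T - t₀) / ρ) with hδdef
  have hδpos : 0 < δ := lt_min (div_pos hδ₁pos hρpos) (div_pos (sub_pos.2 hT) hρpos)
  refine ⟨δ, hδpos, ?_⟩
  intro t ht hdist
  have ht' : t₀ < t := ht
  have hs : 0 < t - t₀ := sub_pos.2 ht'
  have hsδ : t - t₀ < δ := by rwa [Real.dist_eq, abs_of_pos hs] at hdist
  set b := t₀ + ρ * (t - t₀) with hbdef
  have htb : t < b := by nlinarith
  have hρδ₁ : ρ * δ ≤ δ₁ := by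
    calc ρ * δ ≤ ρ * (δ₁ / ρ) := by
          exact mul_le_mul_of_nonneg_left (min_le_left _ _) hρpos.le
      _ = δ₁ := by field_simp
  have hρδT : ρ * δ ≤ T - t₀ := by
    calc ρ * δ ≤ ρ * ((T - t₀) / ρ) := by
          exact mul_le_mul_of_nonneg_left (min_le_right _ _) hρpos.le
      _ = T - t₀ := by field_simp
  have hρs : ρ * (t - t₀) < ρ * δ := by
    exact mul_lt_mul_of_pos_left hsδ hρpos
  have hbT : b ≤ T := by rw [hbdef]; nlinarith
  have htT : t ≤ T := le_of_lt (lt_of_lt_of_le htb hbT)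
  have htmem : t ∈ Ioc t₀ T := ⟨ht', htT⟩
  have hbt0 : 0 < b - t₀ := by rw [hbdef]; nlinarith
  have hbmem : b ∈ Ioc t₀ T := ⟨by linarith, hbT⟩
  -- quotient bounds near t₀
  have hqt : |F t / (t - t₀) - ν₀| < η := by
    have h1 : dist t t₀ < δ₁ := by
      rw [Real.dist_eq, abs_of_pos hs]
      have : δ ≤ δ₁ / ρ := min_le_left _ _
      have h2 : δ₁ / ρ ≤ δ₁ := div_le_self hδ₁pos.le hρ1.le
      linarith
    have := hδ₁ (show t ∈ Ioi t₀ from ht') h1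
    rwa [Real.dist_eq] at this
  have hqb : |F b / (b - t₀) - ν₀| < η := by
    have h1 : dist b t₀ < δ₁ := by
      rw [Real.dist_eq, abs_of_pos hbt0]
      have : b - t₀ = ρ * (t - t₀) := by rw [hbdef]; ring
      rw [this]; linarith
    have := hδ₁ (show b ∈ Ioi t₀ from hbmem.1) h1
    rwa [Real.dist_eq] at this
  -- mean value theorem on [t, b]
  have hsub : Icc t b ⊆ Ioc t₀ T := fun u hu => ⟨lt_of_lt_of_le ht' hu.1, le_trans hu.2 hbT⟩
  have hcontF : ContinuousOn F (Icc t b) :=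
    fun u hu => (hF' u (hsub hu)).continuousAt.continuousWithinAt
  obtain ⟨ξ, hξmem, hξeq⟩ := exists_hasDerivAt_eq_slope F F' htb hcontF
    (fun u hu => hF' u (hsub (Ioo_subset_Icc_self hu)))
  have hξT : ξ ∈ Ioc t₀ T := hsub (Ioo_subset_Icc_self hξmem)
  have hbtpos : 0 < b - t := sub_pos.2 htb
  -- slope bound : |F' ξ - ν₀| ≤ ε/4
  have hnz1 : b - t₀ ≠ 0 := ne_of_gt hbt0
  have hnz2 : t - t₀ ≠ 0 := ne_of_gt hs
  have hnz3 : b - t ≠ 0 := ne_of_gt hbtpos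
  have hkey : F' ξ - ν₀ =
      ((F b / (b - t₀) - ν₀) * (b - t₀) - (F t / (t - t₀) - ν₀) * (t - t₀)) / (b - t) := by
    rw [hξeq]; field_simp; ring
  have habs : |F' ξ - ν₀| ≤ (η * (b - t₀) + η * (t - t₀)) / (b - t) := by
    rw [hkey, abs_div, abs_of_pos hbtpos]
    apply (div_le_div_iff_of_pos_right hbtpos).2
    calc |(F b / (b - t₀) - ν₀) * (b - t₀) - (F t / (t - t₀) - ν₀) * (t - t₀)|
        ≤ |(F b / (b - t₀) - ν₀) * (b - t₀)| + |(F t / (t - t₀) - ν₀) * (t - t₀)| :=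
          abs_sub _ _
      _ = |F b / (b - t₀) - ν₀| * (b - t₀) + |F t / (t - t₀) - ν₀| * (t - t₀) := by
          rw [abs_mul, abs_mul, abs_of_pos hbt0, abs_of_pos hs]
      _ ≤ η * (b - t₀) + η * (t - t₀) := by
          have h1 := mul_le_mul_of_nonneg_right hqb.le hbt0.le
          have h2 := mul_le_mul_of_nonneg_right hqt.le hs.le
          linarith
  have hslope : |F' ξ - ν₀| ≤ ε / 4 := by
    have heq : (η * (b - t₀) + η * (t - t₀)) / (b - t) = ε / 8 := by
      have hb' : b - t₀ = ρ * (t - t₀) := by rw [hbdef]; ring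
      have hbt' : b - t = (ρ - 1) * (t - t₀) := by rw [hbdef]; ring
      rw [hb', hbt', hηdef]
      have hρ1ne : ρ - 1 ≠ 0 := ne_of_gt hρ1'
      have hρ2ne : ρ + 1 ≠ 0 := by positivity
      field_simp
    rw [heq] at habs
    linarith
  -- the set A and its infimum
  set A := {u : ℝ | u ∈ Icc t ξ ∧ ∀ v ∈ Icc u ξ, |F' v - ν₀| ≤ ε} with hAdef
  have hξA : ξ ∈ A := by
    refine ⟨⟨hξmem.1.le, le_refl ξ⟩, fun v hv => ?_⟩
    have hv' : v = ξ := le_antisymm hv.2 hv.1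
    rw [hv']; linarith
  have hAne : A.Nonempty := ⟨ξ, hξA⟩
  have hAbdd : BddBelow A := ⟨t, fun u hu => hu.1.1⟩
  set m := sInf A with hmdef
  have hmt : t ≤ m := le_csInf hAne (fun u hu => hu.1.1)
  have hmξ : m ≤ ξ := csInf_le hAbdd hξA
  have hmmem : m ∈ Ioc t₀ T := ⟨lt_of_lt_of_le ht' hmt, le_trans hmξ hξT.2⟩
  have h_eps : ∀ v ∈ Ioc m ξ, |F' v - ν₀| ≤ ε := by
    intro v hv
    obtain ⟨u, huA, huv⟩ := exists_lt_of_csInf_lt hAne hv.1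
    exact huA.2 v ⟨le_of_lt huv, hv.2⟩
  -- improved bound on (m, ξ]
  have h_half : ∀ v ∈ Ioc m ξ, |F' v - F' ξ| ≤ ε / 4 := by
    intro v hv
    have hvξ : v ≤ ξ := hv.2
    have hvt0 : 0 < v - t₀ := sub_pos.2 (lt_trans hmmem.1 hv.1)
    have hξt0 : 0 < ξ - t₀ := sub_pos.2 hξT.1
    have hsubv : Icc v ξ ⊆ Ioc m ξ := fun u hu => ⟨lt_of_lt_of_le hv.1 hu.1, hu.2⟩
    have hsubT : Icc v ξ ⊆ Ioc t₀ T :=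
      fun u hu => ⟨lt_trans hmmem.1 (hsubv hu).1, le_trans hu.2 hξT.2⟩
    have hC' : ∀ u ∈ Icc v ξ, |F'' u| ≤ C / (u - t₀) := by
      intro u hu
      have h1 : |F' u - ν₀| ≤ ε := h_eps u (hsubv hu)
      have h2 : |F' u| ≤ B := by
        have h3 : |F' u| ≤ |F' u - ν₀| + |ν₀| := by
          have := abs_add_le (F' u - ν₀) ν₀
          simpa using this
        rw [hB]; linarith
      have hgle : g |F' u| ≤ C := by
        rcases eq_or_lt_of_le (abs_nonneg (F' u)) with h0 | h0
        · rw [← h0]; exact le_max_left _ _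
        · exact le_trans (hgmono h0 hBpos h2) (le_max_right _ _)
      have hupos : 0 < u - t₀ := sub_pos.2 (hsubT hu).1
      calc |F'' u| ≤ g |F' u| / (u - t₀) := hbound u (hsubT hu)
        _ ≤ C / (u - t₀) := (div_le_div_iff_of_pos_right hupos).2 hgle
    have hosc := tauberian_osc_bound t₀ F' F'' v ξ C hvξ (lt_trans hmmem.1 hv.1)
      (fun u hu => hF'' u (hsubT hu)) (hF''cont.mono hsubT) hC'
    have hratio : ξ - t₀ ≤ ρ * (v - t₀) := by
      have h1 : ξ < b := hξmem.2
      have h2 : t - t₀ ≤ v - t₀ := by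
        have : t ≤ v := le_trans hmt hv.1.le
        linarith
      have h3 : ρ * (t - t₀) ≤ ρ * (v - t₀) := mul_le_mul_of_nonneg_left h2 hρpos.le
      have h4 : ξ - t₀ < ρ * (t - t₀) := by rw [hbdef] at h1; linarith
      linarith
    have hlog : Real.log (ξ - t₀) - Real.log (v - t₀) ≤ Real.log ρ := by
      have h1 : Real.log (ξ - t₀) ≤ Real.log (ρ * (v - t₀)) := Real.log_le_log hξt0 hratio
      rw [Real.log_mul (ne_of_gt hρpos) (ne_of_gt hvt0)] at h1
      linarith
    calc |F' v - F' ξ| = |F' ξ - F' v| := abs_sub_comm _ _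
      _ ≤ C * (Real.log (ξ - t₀) - Real.log (v - t₀)) := hosc
      _ ≤ C * Real.log ρ := mul_le_mul_of_nonneg_left hlog hCpos.le
      _ = ε / 4 := hClogρ
  have h_half2 : ∀ v ∈ Ioc m ξ, |F' v - ν₀| ≤ ε / 2 := by
    intro v hv
    calc |F' v - ν₀| ≤ |F' v - F' ξ| + |F' ξ - ν₀| := abs_sub_le _ _ _
      _ ≤ ε / 4 + ε / 4 := add_le_add (h_half v hv) hslope
      _ = ε / 2 := by ring
  -- bound at m itself, by continuity
  have hm_half : |F' m - ν₀| ≤ ε / 2 := by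
    rcases eq_or_lt_of_le hmξ with he | hlt
    · rw [he]; linarith
    · haveI hne : (nhdsWithin m (Ioc m ξ)).NeBot := by
        rw [nhdsWithin_Ioc_eq_nhdsGT hlt]; infer_instance
      have hsub2 : Ioc m ξ ⊆ Ioc t₀ T :=
        fun u hu => ⟨lt_trans hmmem.1 hu.1, le_trans hu.2 hξT.2⟩
      have htend : Tendsto F' (nhdsWithin m (Ioc m ξ)) (nhds (F' m)) :=
        (hF'cont m hmmem).mono hsub2
      have habs2 : Tendsto (fun v => |F' v - ν₀|) (nhdsWithin m (Ioc m ξ))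
          (nhds (|F' m - ν₀|)) := (htend.sub_const ν₀).abs
      exact le_of_tendsto habs2
        (eventually_of_mem self_mem_nhdsWithin (fun v hv => h_half2 v hv))
  -- m must equal t
  have hmteq : m = t := by
    by_contra hne
    have hlt : t < m := lt_of_le_of_ne hmt (Ne.symm hne)
    have hcw : ContinuousWithinAt F' (Ioc t₀ T) m := hF'cont m hmmem
    rw [Metric.continuousWithinAt_iff] at hcw
    obtain ⟨δ', hδ'pos, hδ'⟩ := hcw (ε / 4) (by positivity)
    set u := max t (m - δ' / 2) with hudef
    have hum : u < m := max_lt hlt (by linarith)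
    have hut : t ≤ u := le_max_left _ _
    have huA : u ∈ A := by
      refine ⟨⟨hut, le_trans hum.le hmξ⟩, ?_⟩
      intro v hv
      rcases le_or_gt m v with h | h
      · rcases eq_or_lt_of_le h with he | h'
        · rw [← he]; linarith
        · exact h_eps v ⟨h', hv.2⟩
      · have hvmem : v ∈ Ioc t₀ T :=
          ⟨lt_of_lt_of_le ht' (le_trans hut hv.1), le_trans h.le hmmem.2⟩
        have hdv : dist v m < δ' := by
          rw [Real.dist_eq, abs_of_nonpos (by linarith)]
          have h1 : u ≤ v := hv.1
          have h2 : m - δ' / 2 ≤ u := le_max_right _ _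
          linarith
        have h3 := hδ' hvmem hdv
        rw [Real.dist_eq] at h3
        calc |F' v - ν₀| ≤ |F' v - F' m| + |F' m - ν₀| := abs_sub_le _ _ _
          _ ≤ ε / 4 + ε / 2 := add_le_add h3.le hm_half
          _ ≤ ε := by linarith
    have := csInf_le hAbdd huA
    linarith
  -- conclude
  have hfinal : |F' t - ν₀| ≤ ε / 2 := by rw [← hmteq]; exact hm_half
  rw [Real.dist_eq]
  calc |F' t - ν₀| ≤ ε / 2 := hfinal
    _ < ε := by linarith
    _ ≤ ε₀ := hεε₀
end

section
/- Suppose J : [t₀, T) → (0,∞) is C¹ with J̇(t) < 0, J(t) → 0 as t → T⁻, and J̇(t)/J(t)^{1/4} → −√b as t → T⁻ for some b > 0. Then J(t)/(T−t)^{4/3} → A and J̇(t)/(T−t)^{1/3} → −(4/3)A as t → T⁻, where A = (3√b/4)^{4/3}. -/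
open Set Filter

/-- if `J̇ < 0`, `J → 0` at `T⁻` and `J̇/J^{1/4} → −√b` with `b > 0`, then
`J(t)/(T−t)^{4/3} → A` and `J̇(t)/(T−t)^{1/3} → −(4/3)A`, where `A = (3√b/4)^{4/3}`. -/
theorem asymptotics_from_Q_limit (t₀ T b : ℝ) (hT : t₀ < T) (hb : 0 < b)
    (J J' : ℝ → ℝ)
    (hJpos : ∀ t ∈ Ico t₀ T, 0 < J t)
    (hJ' : ∀ t ∈ Ico t₀ T, HasDerivAt J (J' t) t)
    (hJ'cont : ContinuousOn J' (Ico t₀ T))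
    (hJ'neg : ∀ t ∈ Ico t₀ T, J' t < 0)
    (hJlim : Tendsto J (nhdsWithin T (Iio T)) (nhds 0))
    (hQ : Tendsto (fun t => J' t / (J t) ^ ((1 : ℝ) / 4)) (nhdsWithin T (Iio T))
      (nhds (-Real.sqrt b))) :
    Tendsto (fun t => J t / (T - t) ^ ((4 : ℝ) / 3)) (nhdsWithin T (Iio T))
        (nhds ((3 * Real.sqrt b / 4) ^ ((4 : ℝ) / 3))) ∧
      Tendsto (fun t => J' t / (T - t) ^ ((1 : ℝ) / 3)) (nhdsWithin T (Iio T))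
        (nhds (-(4 / 3 * (3 * Real.sqrt b / 4) ^ ((4 : ℝ) / 3)))) := by
  have hsb : 0 < Real.sqrt b := Real.sqrt_pos.mpr hb
  set c : ℝ := 3 * Real.sqrt b / 4 with hc
  have hcpos : 0 < c := by positivity
  have hmem : Ioo t₀ T ∈ nhdsWithin T (Iio T) :=
    Ioo_mem_nhdsLT_of_mem (by constructor <;> simp [hT, le_refl])
  -- L'Hôpital for K = J^{3/4} against g = T - t
  have hK : Tendsto (fun t => (J t) ^ ((3:ℝ)/4) / (T - t)) (nhdsWithin T (Iio T)) (nhds c) := by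
    apply HasDerivAt.lhopital_zero_left_on_Ioo hT
      (f' := fun t => J' t * ((3:ℝ)/4) * (J t) ^ ((3:ℝ)/4 - 1)) (g' := fun _ => (-1 : ℝ))
    · intro x hx
      exact (hJ' x (Ioo_subset_Ico_self hx)).rpow_const
        (Or.inl (hJpos x (Ioo_subset_Ico_self hx)).ne')
    · intro x hx
      simpa using (hasDerivAt_id x).const_sub T
    · intro x hx; norm_num
    · have : Tendsto (fun x : ℝ => x ^ ((3:ℝ)/4)) (nhds (0:ℝ)) (nhds ((0:ℝ) ^ ((3:ℝ)/4))) :=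
        (Real.continuousAt_rpow_const 0 (3/4) (Or.inr (by norm_num)))
      have := this.comp hJlim
      simpa [Function.comp_def, Real.zero_rpow (by norm_num : ((3:ℝ)/4) ≠ 0)] using this
    · have : Tendsto (fun t : ℝ => T - t) (nhds T) (nhds (T - T)) :=
        (continuous_const.sub continuous_id).tendsto T
      simpa using this.mono_left nhdsWithin_le_nhds
    · have key : Tendsto (fun t => (-(3:ℝ)/4) * (J' t / (J t) ^ ((1:ℝ)/4)))
          (nhdsWithin T (Iio T)) (nhds ((-(3:ℝ)/4) * (-Real.sqrt b))) := hQ.const_mul _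
      have heq : (-(3:ℝ)/4) * (-Real.sqrt b) = c := by rw [hc]; ring
      rw [heq] at key
      refine key.congr' ?_
      filter_upwards [hmem] with t ht
      have hJt : 0 < J t := hJpos t (Ioo_subset_Ico_self ht)
      have : (J t) ^ ((3:ℝ)/4 - 1) = ((J t) ^ ((1:ℝ)/4))⁻¹ := by
        rw [show ((3:ℝ)/4 - 1) = -(1/4) by norm_num, Real.rpow_neg hJt.le]
      rw [this]
      field_simp
  -- first limit
  have h1 : Tendsto (fun t => J t / (T - t) ^ ((4:ℝ)/3)) (nhdsWithin T (Iio T))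
      (nhds (c ^ ((4:ℝ)/3))) := by
    have := hK.rpow_const (p := (4:ℝ)/3) (Or.inl hcpos.ne')
    refine this.congr' ?_
    filter_upwards [hmem] with t ht
    have hJt : 0 < J t := hJpos t (Ioo_subset_Ico_self ht)
    have hTt : 0 < T - t := sub_pos.mpr ht.2
    rw [Real.div_rpow (Real.rpow_nonneg hJt.le _) hTt.le, ← Real.rpow_mul hJt.le]
    norm_num
  refine ⟨h1, ?_⟩
  -- second limit
  have h2 : Tendsto (fun t => (J' t / (J t) ^ ((1:ℝ)/4)) * (J t / (T - t) ^ ((4:ℝ)/3)) ^ ((1:ℝ)/4))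
      (nhdsWithin T (Iio T)) (nhds ((-Real.sqrt b) * (c ^ ((4:ℝ)/3)) ^ ((1:ℝ)/4))) :=
    hQ.mul (h1.rpow_const (Or.inl (by positivity)))
  have hval : (-Real.sqrt b) * (c ^ ((4:ℝ)/3)) ^ ((1:ℝ)/4) = -(4/3 * c ^ ((4:ℝ)/3)) := by
    rw [← Real.rpow_mul hcpos.le]
    have h13 : ((4:ℝ)/3 * (1/4)) = 1/3 := by norm_num
    rw [h13]
    have hsb' : Real.sqrt b = 4/3 * c := by rw [hc]; ring
    rw [hsb']
    have : c ^ ((4:ℝ)/3) = c * c ^ ((1:ℝ)/3) := by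
      rw [← Real.rpow_one_add' hcpos.le (by norm_num)]
      norm_num
    rw [this]; ring
  rw [hval] at h2
  refine h2.congr' ?_
  filter_upwards [hmem] with t ht
  have hJt : 0 < J t := hJpos t (Ioo_subset_Ico_self ht)
  have hTt : 0 < T - t := sub_pos.mpr ht.2
  rw [Real.div_rpow hJt.le (by positivity), ← Real.rpow_mul hTt.le]
  have h13 : ((4:ℝ)/3 * (1/4)) = 1/3 := by norm_num
  rw [h13]
  have hJ14 : ((J t) ^ ((1:ℝ)/4)) ≠ 0 := by positivity
  field_simp
end
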